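/- Let Y follow the univariate zero-inflated Poisson log-normal distribution ZIPLN(π, μ, σ²). Then the quantity Q₂(Y) := E[Y³] − 3·E[Y²] + 2·E[Y] satisfies Q₂(Y) = π·exp(3μ + (9/2)σ²) = π·Q₁(Y)³, where Q₁(Y) = E[Y²]/E[Y] − 1. -/

import Mathlib

open MeasureTheory ProbabilityTheory Real

/-- The probability mass function of the univariate zero-inflated Poisson log-normal
distribution ZIPLN(π, μ, σ²):
`p(y) = (1−π)·1{y=0} + π·∫ exp(−e^{μ+z})·e^{(μ+z)y}/y! dγ(z)`,
where `γ` is the centered Gaussian measure on ℝ with variance `σ²`.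
Here `pr` plays the role of the zero-inflation probability π. -/
noncomputable def ziplnPMF (pr μ σ : ℝ) (y : ℕ) : ℝ :=
  (1 - pr) * (if y = 0 then 1 else 0) +
    pr * ∫ z, exp (-exp (μ + z)) * exp ((μ + z) * y) / (Nat.factorial y)
        ∂(gaussianReal 0 ⟨σ ^ 2, sq_nonneg σ⟩)

open scoped NNReal ENNReal


lemma zipln_summable_desc (l : ℝ) (k : ℕ) :
    Summable (fun y : ℕ => (y.descFactorial k : ℝ) * l ^ y / y.factorial) := by
  have hv : ∀ x ∉ Set.range (· + k : ℕ → ℕ),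
      (x.descFactorial k : ℝ) * l ^ x / x.factorial = 0 := by
    intro x hx
    have hxk : x < k := by
      by_contra h
      exact hx ⟨x - k, Nat.sub_add_cancel (le_of_not_gt h)⟩
    simp [Nat.descFactorial_eq_zero_iff_lt.mpr hxk]
  have hinj : Function.Injective (· + k : ℕ → ℕ) := add_left_injective k
  rw [← Function.Injective.summable_iff hinj hv]
  have heq : ∀ n : ℕ, ((n + k).descFactorial k : ℝ) * l ^ (n + k) / (n + k).factorial
      = l ^ k * (l ^ n / n.factorial) := by
    intro n
    have h : (n : ℕ).factorial * (n + k).descFactorial k = (n + k).factorial := by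
      have := Nat.factorial_mul_descFactorial (n := n + k) (k := k) (Nat.le_add_left k n)
      simpa using this
    have hcast : ((n + k).descFactorial k : ℝ) * n.factorial = (n + k).factorial := by
      exact_mod_cast by rw [mul_comm]; exact_mod_cast congrArg (Nat.cast (R := ℝ)) h
    have h1 : (n.factorial : ℝ) ≠ 0 := Nat.cast_ne_zero.mpr n.factorial_ne_zero
    have h2 : ((n + k).factorial : ℝ) ≠ 0 := Nat.cast_ne_zero.mpr (n + k).factorial_ne_zero
    field_simp
    rw [pow_add]
    linear_combination (l ^ n * l ^ k) * hcast
  have : Summable (fun n : ℕ => l ^ k * (l ^ n / n.factorial)) :=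
    (Real.summable_pow_div_factorial l).mul_left _
  refine this.congr fun n => ?_
  simp only [Function.comp]
  exact (heq n).symm

lemma zipln_tsum_desc (l : ℝ) (k : ℕ) :
    ∑' y : ℕ, (y.descFactorial k : ℝ) * l ^ y / y.factorial = l ^ k * Real.exp l := by
  have hv : ∀ x ∉ Set.range (· + k : ℕ → ℕ),
      (x.descFactorial k : ℝ) * l ^ x / x.factorial = 0 := by
    intro x hx
    have hxk : x < k := by
      by_contra h
      exact hx ⟨x - k, Nat.sub_add_cancel (le_of_not_gt h)⟩
    simp [Nat.descFactorial_eq_zero_iff_lt.mpr hxk]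
  have hinj : Function.Injective (· + k : ℕ → ℕ) := add_left_injective k
  have hsupp : Function.support (fun y : ℕ => (y.descFactorial k : ℝ) * l ^ y / y.factorial)
      ⊆ Set.range (· + k : ℕ → ℕ) := by
    intro x hx
    by_contra hc
    exact hx (hv x hc)
  rw [← Function.Injective.tsum_eq hinj hsupp]
  have heq : ∀ n : ℕ, ((n + k).descFactorial k : ℝ) * l ^ (n + k) / (n + k).factorial
      = l ^ k * (l ^ n / n.factorial) := by
    intro n
    have h : (n : ℕ).factorial * (n + k).descFactorial k = (n + k).factorial := by
      have := Nat.factorial_mul_descFactorial (n := n + k) (k := k) (Nat.le_add_left k n)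
      simpa using this
    have hcast : ((n + k).descFactorial k : ℝ) * n.factorial = (n + k).factorial := by
      exact_mod_cast by rw [mul_comm]; exact_mod_cast congrArg (Nat.cast (R := ℝ)) h
    have h1 : (n.factorial : ℝ) ≠ 0 := Nat.cast_ne_zero.mpr n.factorial_ne_zero
    have h2 : ((n + k).factorial : ℝ) ≠ 0 := Nat.cast_ne_zero.mpr (n + k).factorial_ne_zero
    field_simp
    rw [pow_add]
    linear_combination (l ^ n * l ^ k) * hcast
  calc ∑' n : ℕ, ((n + k).descFactorial k : ℝ) * l ^ (n + k) / (n + k).factorial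
      = ∑' n : ℕ, l ^ k * (l ^ n / n.factorial) := tsum_congr heq
    _ = l ^ k * ∑' n : ℕ, l ^ n / n.factorial := tsum_mul_left
    _ = l ^ k * Real.exp l := by
        rw [Real.exp_eq_exp_ℝ, NormedSpace.exp_eq_tsum_div]

lemma zipln_pow_one_eq (y : ℕ) : (y : ℝ) ^ 1 = (y.descFactorial 1 : ℝ) := by
  simp [Nat.descFactorial_one]

lemma zipln_pow_two_eq (y : ℕ) :
    (y : ℝ) ^ 2 = (y.descFactorial 2 : ℝ) + (y.descFactorial 1 : ℝ) := by
  match y with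
  | 0 => simp
  | 1 => simp [Nat.descFactorial]
  | (n+2) =>
    have h2 : (n+2).descFactorial 2 = (n+2) * (n+1) := by
      simp [Nat.descFactorial]; ring
    rw [h2, Nat.descFactorial_one]
    push_cast
    ring

lemma zipln_pow_three_eq (y : ℕ) : (y : ℝ) ^ 3
    = (y.descFactorial 3 : ℝ) + 3 * (y.descFactorial 2 : ℝ) + (y.descFactorial 1 : ℝ) := by
  match y with
  | 0 => simp
  | 1 => simp [Nat.descFactorial]
  | 2 => simp [Nat.descFactorial]; norm_num
  | (n+3) =>
    have h3 : (n+3).descFactorial 3 = (n+3) * ((n+2) * (n+1)) := by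
      simp [Nat.descFactorial]; ring
    have h2 : (n+3).descFactorial 2 = (n+3) * (n+2) := by
      simp [Nat.descFactorial]; ring
    rw [h3, h2, Nat.descFactorial_one]
    push_cast
    ring

lemma zipln_summable_pow_mul (l : ℝ) (k : ℕ) (hk : k ≤ 3) :
    Summable (fun y : ℕ => (y : ℝ) ^ k * l ^ y / y.factorial) := by
  interval_cases k
  · simpa using Real.summable_pow_div_factorial l
  · exact (zipln_summable_desc l 1).congr fun y => by rw [← zipln_pow_one_eq]
  · refine ((zipln_summable_desc l 2).add (zipln_summable_desc l 1)).congr fun y => ?_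
    rw [← add_div, ← add_mul, ← zipln_pow_two_eq]
  · refine (((zipln_summable_desc l 3).add ((zipln_summable_desc l 2).mul_left 3)).add
      (zipln_summable_desc l 1)).congr fun y => ?_
    have : (3:ℝ) * ((y.descFactorial 2 : ℝ) * l ^ y / y.factorial)
        = (3 * (y.descFactorial 2 : ℝ)) * l ^ y / y.factorial := by ring
    rw [this, ← add_div, ← add_div, ← add_mul, ← add_mul, ← zipln_pow_three_eq]

lemma zipln_tsum_pow_one (l : ℝ) :
    ∑' y : ℕ, (y : ℝ) * l ^ y / y.factorial = l * Real.exp l := by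
  have := zipln_tsum_desc l 1
  rw [pow_one] at this
  rw [← this]
  exact tsum_congr fun y => by rw [Nat.descFactorial_one]

lemma zipln_tsum_pow_two (l : ℝ) :
    ∑' y : ℕ, (y : ℝ) ^ 2 * l ^ y / y.factorial = (l ^ 2 + l) * Real.exp l := by
  have h : ∀ y : ℕ, (y : ℝ) ^ 2 * l ^ y / y.factorial
      = (y.descFactorial 2 : ℝ) * l ^ y / y.factorial
        + (y.descFactorial 1 : ℝ) * l ^ y / y.factorial := by
    intro y; rw [← add_div, ← add_mul, ← zipln_pow_two_eq]
  rw [tsum_congr h, Summable.tsum_add (zipln_summable_desc l 2) (zipln_summable_desc l 1),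
    zipln_tsum_desc, zipln_tsum_desc]
  ring

lemma zipln_tsum_pow_three (l : ℝ) :
    ∑' y : ℕ, (y : ℝ) ^ 3 * l ^ y / y.factorial = (l ^ 3 + 3 * l ^ 2 + l) * Real.exp l := by
  have h : ∀ y : ℕ, (y : ℝ) ^ 3 * l ^ y / y.factorial
      = ((y.descFactorial 3 : ℝ) * l ^ y / y.factorial
        + 3 * ((y.descFactorial 2 : ℝ) * l ^ y / y.factorial))
        + (y.descFactorial 1 : ℝ) * l ^ y / y.factorial := by
    intro y
    have : (3:ℝ) * ((y.descFactorial 2 : ℝ) * l ^ y / y.factorial)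
        = (3 * (y.descFactorial 2 : ℝ)) * l ^ y / y.factorial := by ring
    rw [this, ← add_div, ← add_div, ← add_mul, ← add_mul, ← zipln_pow_three_eq]
  rw [tsum_congr h,
    Summable.tsum_add ((zipln_summable_desc l 3).add ((zipln_summable_desc l 2).mul_left 3))
      (zipln_summable_desc l 1),
    Summable.tsum_add (zipln_summable_desc l 3) ((zipln_summable_desc l 2).mul_left 3),
    tsum_mul_left, zipln_tsum_desc, zipln_tsum_desc, zipln_tsum_desc]
  ring

lemma zipln_gaussianPDFReal_mul_exp (v : ℝ≥0) (hv : v ≠ 0) (t x : ℝ) :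
    gaussianPDFReal 0 v x * Real.exp (t * x)
      = Real.exp ((v : ℝ) * t ^ 2 / 2) * gaussianPDFReal (t * v) v x := by
  have hv' : (0:ℝ) < v := lt_of_le_of_ne (NNReal.coe_nonneg v) (by exact_mod_cast hv.symm)
  simp only [gaussianPDFReal]
  rw [mul_assoc, ← Real.exp_add, mul_left_comm, ← Real.exp_add]
  congr 1
  field_simp
  ring

lemma zipln_integrable_pdf_mul_exp (v : ℝ≥0) (hv : v ≠ 0) (t : ℝ) :
    Integrable (fun x => gaussianPDFReal 0 v x * Real.exp (t * x)) := by
  have : (fun x => gaussianPDFReal 0 v x * Real.exp (t * x))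
      = fun x => Real.exp ((v : ℝ) * t ^ 2 / 2) * gaussianPDFReal (t * v) v x := by
    funext x; exact zipln_gaussianPDFReal_mul_exp v hv t x
  rw [this]
  exact (integrable_gaussianPDFReal _ _).const_mul _

lemma zipln_integral_pdf_mul_exp (v : ℝ≥0) (hv : v ≠ 0) (t : ℝ) :
    ∫ x, gaussianPDFReal 0 v x * Real.exp (t * x) = Real.exp ((v : ℝ) * t ^ 2 / 2) := by
  simp_rw [fun x => zipln_gaussianPDFReal_mul_exp v hv t x]
  rw [integral_const_mul, integral_gaussianPDFReal_eq_one _ hv, mul_one]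

lemma zipln_integral_gaussianReal_eq (v : ℝ≥0) (hv : v ≠ 0) (g : ℝ → ℝ) :
    ∫ z, g z ∂(gaussianReal 0 v) = ∫ x, gaussianPDFReal 0 v x * g x := by
  rw [gaussianReal_of_var_ne_zero 0 hv]
  have hmeas : Measurable fun x => (gaussianPDFReal 0 v x).toNNReal :=
    (measurable_gaussianPDFReal 0 v).real_toNNReal
  have hdens : (gaussianPDF 0 v) = fun x => ((gaussianPDFReal 0 v x).toNNReal : ℝ≥0∞) := by
    funext x; rfl
  rw [hdens, integral_withDensity_eq_integral_smul hmeas]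
  congr 1
  funext x
  simp [NNReal.smul_def, Real.coe_toNNReal _ (gaussianPDFReal_nonneg 0 v x)]

lemma zipln_integral_exp_gaussianReal (v : ℝ≥0) (hv : v ≠ 0) (t : ℝ) :
    ∫ z, Real.exp (t * z) ∂(gaussianReal 0 v) = Real.exp ((v : ℝ) * t ^ 2 / 2) := by
  rw [zipln_integral_gaussianReal_eq v hv]
  exact zipln_integral_pdf_mul_exp v hv t

lemma zipln_integrable_exp_gaussianReal (v : ℝ≥0) (hv : v ≠ 0) (t : ℝ) :
    Integrable (fun z => Real.exp (t * z)) (gaussianReal 0 v) := by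
  rw [gaussianReal_of_var_ne_zero 0 hv]
  have hmeas : Measurable fun x => (gaussianPDFReal 0 v x).toNNReal :=
    (measurable_gaussianPDFReal 0 v).real_toNNReal
  have hdens : (gaussianPDF 0 v) = fun x => ((gaussianPDFReal 0 v x).toNNReal : ℝ≥0∞) := by
    funext x; rfl
  rw [hdens]
  refine (integrable_withDensity_iff_integrable_smul hmeas
    (g := fun z => Real.exp (t * z))).mpr ?_
  refine (zipln_integrable_pdf_mul_exp v hv t).congr (ae_of_all _ fun x => ?_)
  simp [NNReal.smul_def, Real.coe_toNNReal _ (gaussianPDFReal_nonneg 0 v x)]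

lemma zipln_moment (pr μ σ : ℝ) (w : ℕ → ℝ) (hw0 : w 0 = 0)
    (hw : ∀ y, 0 ≤ w y) (P : ℝ → ℝ)
    (hP : ∀ l : ℝ, 0 < l → ∑' y : ℕ, w y * (Real.exp (-l) * l ^ y / y.factorial) = P l)
    (hS : ∀ l : ℝ, 0 < l → Summable (fun y : ℕ => w y * (Real.exp (-l) * l ^ y / y.factorial)))
    (hInt : Integrable (fun z => P (Real.exp (μ + z))) (gaussianReal 0 ⟨σ ^ 2, sq_nonneg σ⟩)) :
    ∑' y : ℕ, w y * ziplnPMF pr μ σ y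
      = pr * ∫ z, P (Real.exp (μ + z)) ∂(gaussianReal 0 ⟨σ ^ 2, sq_nonneg σ⟩) := by
  set γ := gaussianReal 0 ⟨σ ^ 2, sq_nonneg σ⟩ with hγ
  set g : ℕ → ℝ → ℝ := fun y z =>
    w y * (Real.exp (-Real.exp (μ + z)) * Real.exp (μ + z) ^ y / y.factorial) with hg
  have hgnn : ∀ y z, 0 ≤ g y z := fun y z => mul_nonneg (hw y) (by positivity)
  have hcont : ∀ y : ℕ, Continuous (g y) := fun y => by
    rw [hg]; fun_prop
  have hmeas : ∀ y : ℕ, AEStronglyMeasurable (g y) γ := fun y =>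
    (hcont y).aestronglyMeasurable
  have hsum_z : ∀ z : ℝ, ∑' y : ℕ, g y z = P (Real.exp (μ + z)) := fun z =>
    hP _ (Real.exp_pos _)
  have hfin : ∑' y : ℕ, ∫⁻ z, ‖g y z‖₊ ∂γ ≠ ∞ := by
    rw [← lintegral_tsum (fun y => (hmeas y).aemeasurable.nnnorm.coe_nnreal_ennreal)]
    have hpt : ∀ z : ℝ, ∑' y : ℕ, (‖g y z‖₊ : ℝ≥0∞)
        = ENNReal.ofReal (P (Real.exp (μ + z))) := by
      intro z
      rw [← hsum_z z, ENNReal.ofReal_tsum_of_nonneg (fun y => hgnn y z)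
        (hS _ (Real.exp_pos _))]
      exact tsum_congr fun y => by
        rw [show (‖g y z‖₊ : ℝ≥0∞) = ENNReal.ofReal ‖g y z‖ from (ofReal_norm _).symm, Real.norm_of_nonneg (hgnn y z)]
    rw [lintegral_congr hpt]
    have hPnn : 0 ≤ᵐ[γ] fun z => P (Real.exp (μ + z)) := by
      refine ae_of_all _ fun z => ?_
      show (0:ℝ) ≤ P (Real.exp (μ + z))
      rw [← hsum_z z]
      exact tsum_nonneg fun y => hgnn y z
    exact ((hasFiniteIntegral_iff_ofReal hPnn).mp hInt.2).ne
  have hterm : ∀ y : ℕ, w y * ziplnPMF pr μ σ y = pr * ∫ z, g y z ∂γ := by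
    intro y
    rcases eq_or_ne y 0 with rfl | hy
    · simp [hw0, hg]
    · rw [ziplnPMF, if_neg hy, mul_zero, zero_add, ← mul_assoc, mul_comm (w y) pr,
        mul_assoc, ← integral_const_mul]
      rw [← hγ]
      congr 1
      refine integral_congr_ae (ae_of_all _ fun z => ?_)
      show w y * (Real.exp (-Real.exp (μ + z)) * Real.exp ((μ + z) * y)
        / (Nat.factorial y)) = g y z
      rw [hg]
      simp only [mul_comm (μ + z) (y : ℝ), Real.exp_nat_mul]
  calc ∑' y : ℕ, w y * ziplnPMF pr μ σ y
      = ∑' y : ℕ, pr * ∫ z, g y z ∂γ := tsum_congr hterm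
    _ = pr * ∑' y : ℕ, ∫ z, g y z ∂γ := tsum_mul_left
    _ = pr * ∫ z, ∑' y : ℕ, g y z ∂γ := by rw [integral_tsum hmeas hfin]
    _ = pr * ∫ z, P (Real.exp (μ + z)) ∂γ := by
        congr 1
        exact integral_congr_ae (ae_of_all _ hsum_z)


lemma zipln_var_ne_zero {σ : ℝ} (hσ : 0 < σ) : (⟨σ ^ 2, sq_nonneg σ⟩ : ℝ≥0) ≠ 0 := by
  intro h
  have : σ ^ 2 = 0 := congrArg NNReal.toReal h
  exact (pow_ne_zero 2 hσ.ne') this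

lemma zipln_integrable_exp_affine {σ : ℝ} (hσ : 0 < σ) (μ c : ℝ) :
    Integrable (fun z => Real.exp (c * (μ + z))) (gaussianReal 0 ⟨σ ^ 2, sq_nonneg σ⟩) := by
  have : (fun z => Real.exp (c * (μ + z)))
      = fun z => Real.exp (c * μ) * Real.exp (c * z) := by
    funext z; rw [← Real.exp_add]; ring_nf
  rw [this]
  exact (zipln_integrable_exp_gaussianReal _ (zipln_var_ne_zero hσ) c).const_mul _

lemma zipln_integral_exp_affine {σ : ℝ} (hσ : 0 < σ) (μ c : ℝ) :
    ∫ z, Real.exp (c * (μ + z)) ∂(gaussianReal 0 ⟨σ ^ 2, sq_nonneg σ⟩)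
      = Real.exp (c * μ + σ ^ 2 * c ^ 2 / 2) := by
  have h1 : (fun z => Real.exp (c * (μ + z)))
      = fun z => Real.exp (c * μ) * Real.exp (c * z) := by
    funext z; rw [← Real.exp_add]; ring_nf
  rw [h1, integral_const_mul,
    zipln_integral_exp_gaussianReal _ (zipln_var_ne_zero hσ) c, ← Real.exp_add]
  norm_num
  exact Or.inl rfl

lemma exp_negl_mul (l Q : ℝ) : Real.exp (-l) * (Q * Real.exp l) = Q := by
  rw [Real.exp_neg]
  field_simp

lemma zipln_M1 (pr μ : ℝ) {σ : ℝ} (hσ : 0 < σ) :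
    ∑' y : ℕ, (y : ℝ) * ziplnPMF pr μ σ y = pr * Real.exp (μ + σ ^ 2 / 2) := by
  have h := zipln_moment pr μ σ (fun y => (y : ℝ)) (by norm_num) (fun y => y.cast_nonneg)
    (fun l => l)
    (fun l hl => by
      have hc : ∀ y : ℕ, (y : ℝ) * (Real.exp (-l) * l ^ y / y.factorial)
          = Real.exp (-l) * ((y : ℝ) * l ^ y / y.factorial) := fun y => by ring
      rw [tsum_congr hc, tsum_mul_left, zipln_tsum_pow_one, exp_negl_mul])
    (fun l hl => by
      refine ((zipln_summable_pow_mul l 1 (by norm_num)).mul_left (Real.exp (-l))).congr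
        fun y => ?_
      rw [pow_one]; ring)
    (by simpa using zipln_integrable_exp_affine hσ μ 1)
  rw [h]
  have : ∀ z : ℝ, (fun l : ℝ => l) (Real.exp (μ + z)) = Real.exp (1 * (μ + z)) := by
    intro z; norm_num
  rw [integral_congr_ae (ae_of_all _ this), zipln_integral_exp_affine hσ μ 1]
  norm_num

lemma zipln_M2 (pr μ : ℝ) {σ : ℝ} (hσ : 0 < σ) :
    ∑' y : ℕ, (y : ℝ) ^ 2 * ziplnPMF pr μ σ y
      = pr * (Real.exp (2 * μ + 2 * σ ^ 2) + Real.exp (μ + σ ^ 2 / 2)) := by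
  have h := zipln_moment pr μ σ (fun y => (y : ℝ) ^ 2) (by norm_num)
    (fun y => by positivity) (fun l => l ^ 2 + l)
    (fun l hl => by
      have hc : ∀ y : ℕ, (y : ℝ) ^ 2 * (Real.exp (-l) * l ^ y / y.factorial)
          = Real.exp (-l) * ((y : ℝ) ^ 2 * l ^ y / y.factorial) := fun y => by ring
      rw [tsum_congr hc, tsum_mul_left, zipln_tsum_pow_two, exp_negl_mul])
    (fun l hl => by
      refine ((zipln_summable_pow_mul l 2 (by norm_num)).mul_left (Real.exp (-l))).congr
        fun y => ?_
      ring)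
    (by
      have : (fun z => (fun l : ℝ => l ^ 2 + l) (Real.exp (μ + z)))
          = fun z => Real.exp (2 * (μ + z)) + Real.exp (1 * (μ + z)) := by
        funext z
        show Real.exp (μ + z) ^ 2 + Real.exp (μ + z) = _
        rw [← Real.exp_nat_mul]
        norm_num
      rw [this]
      exact (zipln_integrable_exp_affine hσ μ 2).add (zipln_integrable_exp_affine hσ μ 1))
  rw [h]
  have : ∀ z : ℝ, (fun l : ℝ => l ^ 2 + l) (Real.exp (μ + z))
      = Real.exp (2 * (μ + z)) + Real.exp (1 * (μ + z)) := by
    intro z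
    show Real.exp (μ + z) ^ 2 + Real.exp (μ + z) = _
    rw [← Real.exp_nat_mul]
    norm_num
  rw [integral_congr_ae (ae_of_all _ this),
    integral_add (zipln_integrable_exp_affine hσ μ 2) (zipln_integrable_exp_affine hσ μ 1),
    zipln_integral_exp_affine hσ μ 2, zipln_integral_exp_affine hσ μ 1]
  ring_nf

lemma zipln_M3 (pr μ : ℝ) {σ : ℝ} (hσ : 0 < σ) :
    ∑' y : ℕ, (y : ℝ) ^ 3 * ziplnPMF pr μ σ y
      = pr * (Real.exp (3 * μ + 9 / 2 * σ ^ 2) + 3 * Real.exp (2 * μ + 2 * σ ^ 2)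
        + Real.exp (μ + σ ^ 2 / 2)) := by
  have h := zipln_moment pr μ σ (fun y => (y : ℝ) ^ 3) (by norm_num)
    (fun y => by positivity) (fun l => l ^ 3 + 3 * l ^ 2 + l)
    (fun l hl => by
      have hc : ∀ y : ℕ, (y : ℝ) ^ 3 * (Real.exp (-l) * l ^ y / y.factorial)
          = Real.exp (-l) * ((y : ℝ) ^ 3 * l ^ y / y.factorial) := fun y => by ring
      rw [tsum_congr hc, tsum_mul_left, zipln_tsum_pow_three, exp_negl_mul])
    (fun l hl => by
      refine ((zipln_summable_pow_mul l 3 (by norm_num)).mul_left (Real.exp (-l))).congr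
        fun y => ?_
      ring)
    (by
      have : (fun z => (fun l : ℝ => l ^ 3 + 3 * l ^ 2 + l) (Real.exp (μ + z)))
          = fun z => Real.exp (3 * (μ + z)) + 3 * Real.exp (2 * (μ + z))
            + Real.exp (1 * (μ + z)) := by
        funext z
        show Real.exp (μ + z) ^ 3 + 3 * Real.exp (μ + z) ^ 2 + Real.exp (μ + z) = _
        rw [← Real.exp_nat_mul, ← Real.exp_nat_mul]
        norm_num
      rw [this]
      exact ((zipln_integrable_exp_affine hσ μ 3).add
        ((zipln_integrable_exp_affine hσ μ 2).const_mul 3)).add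
        (zipln_integrable_exp_affine hσ μ 1))
  rw [h]
  have : ∀ z : ℝ, (fun l : ℝ => l ^ 3 + 3 * l ^ 2 + l) (Real.exp (μ + z))
      = Real.exp (3 * (μ + z)) + 3 * Real.exp (2 * (μ + z)) + Real.exp (1 * (μ + z)) := by
    intro z
    show Real.exp (μ + z) ^ 3 + 3 * Real.exp (μ + z) ^ 2 + Real.exp (μ + z) = _
    rw [← Real.exp_nat_mul, ← Real.exp_nat_mul]
    norm_num
  have h23 : Integrable (fun z => Real.exp (3 * (μ + z)) + 3 * Real.exp (2 * (μ + z)))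
      (gaussianReal 0 ⟨σ ^ 2, sq_nonneg σ⟩) :=
    (zipln_integrable_exp_affine hσ μ 3).add
      ((zipln_integrable_exp_affine hσ μ 2).const_mul 3)
  rw [integral_congr_ae (ae_of_all _ this),
    integral_add h23 (zipln_integrable_exp_affine hσ μ 1),
    integral_add (zipln_integrable_exp_affine hσ μ 3)
      ((zipln_integrable_exp_affine hσ μ 2).const_mul 3),
    integral_const_mul,
    zipln_integral_exp_affine hσ μ 3, zipln_integral_exp_affine hσ μ 2,
    zipln_integral_exp_affine hσ μ 1]
  ring_nf

/-- For a ZIPLN(π, μ, σ²) random variable, the quantity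
`Q₂(Y) = E[Y³] − 3·E[Y²] + 2·E[Y]` equals `π·exp(3μ + (9/2)σ²) = π·Q₁(Y)³`,
where `Q₁(Y) = E[Y²]/E[Y] − 1`. -/
theorem zipln_Q2 (pr μ σ : ℝ) (hpr : pr ∈ Set.Ioc (0 : ℝ) 1) (hσ : 0 < σ)
    (Q₁ Q₂ : ℝ)
    (hQ₁ : Q₁ = (∑' y : ℕ, (y : ℝ) ^ 2 * ziplnPMF pr μ σ y)
        / (∑' y : ℕ, (y : ℝ) * ziplnPMF pr μ σ y) - 1)
    (hQ₂ : Q₂ = (∑' y : ℕ, (y : ℝ) ^ 3 * ziplnPMF pr μ σ y)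
        - 3 * (∑' y : ℕ, (y : ℝ) ^ 2 * ziplnPMF pr μ σ y)
        + 2 * (∑' y : ℕ, (y : ℝ) * ziplnPMF pr μ σ y)) :
    Q₂ = pr * exp (3 * μ + (9 / 2) * σ ^ 2) ∧ Q₂ = pr * Q₁ ^ 3 := by
  obtain ⟨hpr0, -⟩ := hpr
  rw [zipln_M1 pr μ hσ, zipln_M2 pr μ hσ, zipln_M3 pr μ hσ] at hQ₂
  rw [zipln_M1 pr μ hσ, zipln_M2 pr μ hσ] at hQ₁
  have hB : Real.exp (μ + σ ^ 2 / 2) ≠ 0 := Real.exp_ne_zero _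
  have hQ2' : Q₂ = pr * Real.exp (3 * μ + 9 / 2 * σ ^ 2) := by rw [hQ₂]; ring
  have hQ1' : Q₁ = Real.exp (μ + 3 / 2 * σ ^ 2) := by
    rw [hQ₁]
    have hdiv : pr * (Real.exp (2 * μ + 2 * σ ^ 2) + Real.exp (μ + σ ^ 2 / 2))
        / (pr * Real.exp (μ + σ ^ 2 / 2))
        = Real.exp (2 * μ + 2 * σ ^ 2) / Real.exp (μ + σ ^ 2 / 2) + 1 := by
      field_simp
    rw [hdiv, add_sub_cancel_right, ← Real.exp_sub]
    congr 1
    ring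
  refine ⟨by rw [hQ2'], ?_⟩
  rw [hQ2', hQ1', ← Real.exp_nat_mul]
  norm_num
  left
  ring
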